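/- Fix a prime $p$ and integers $m\ge 1$, $k\ge 2m+1$, and let $\Gamma_{p,m,k}=\min_{0<z\le 1}\frac{1+z+\dots+z^{p-1}}{z^{(p-1)m/k}}$. Let $a_{j,i}\in\mathbb{F}_p$ ($j\in[m]$, $i\in[k]$) satisfy $\sum_{i=1}^k a_{j,i}=0$ for each $j$. Then for any $n\ge 0$, every subset $A\subseteq\mathbb{F}_p^n$ with $|A|>(\Gamma_{p,m,k})^n$ contains a solution $(x_1,\dots,x_k)\in A^k$ to the system $\sum_{i=1}^k a_{j,i}x_i=0$ (for all $j\in[m]$) with $x_1,\dots,x_k$ not all equal. -/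

import Mathlib

/-- The constant `Γ_{p,m,k} = min_{0 < z ≤ 1} (1 + z + … + z^{p-1}) / z^{(p-1)m/k}`. -/
noncomputable def Gamma (p m k : ℕ) : ℝ :=
  sInf ((fun z : ℝ => (∑ i ∈ Finset.range p, z ^ i) / z ^ (((p - 1 : ℕ) * m : ℝ) / k))
    '' Set.Ioc (0 : ℝ) 1)

open Finset Module

variable {K : Type*} [Field K] [DecidableEq K] {β : Type*} [Fintype β] [DecidableEq β]

/-- restriction map to a finset, as a linear map on a submodule -/
def resMap (H : Submodule K (β → K)) (T : Finset β) : H →ₗ[K] (↥T → K) where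
  toFun h := fun b => (h : β → K) b.1
  map_add' _ _ := rfl
  map_smul' _ _ := rfl

theorem exists_big_support (H : Submodule K (β → K)) :
    ∃ h ∈ H, finrank K H ≤ (univ.filter (fun b => (h b ≠ 0 : Prop))).card := by
  classical
  suffices key : ∀ T : Finset β, Function.Injective (resMap H T) →
      ∃ h ∈ H, finrank K H ≤ (univ.filter (fun b => (h b ≠ 0 : Prop))).card by
    refine key univ ?_
    intro x y hxy
    ext b
    exact congrFun hxy ⟨b, mem_univ b⟩
  intro T
  induction T using Finset.strongInduction with
  | _ T ih =>
    intro hinj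
    by_cases hex : ∃ b ∈ T, Function.Injective (resMap H (T.erase b))
    · obtain ⟨b, hb, hbi⟩ := hex
      exact ih (T.erase b) (Finset.erase_ssubset hb) hbi
    · push_neg at hex
      have hchoice : ∀ b ∈ T, ∃ g : β → K, g ∈ H ∧ g b ≠ 0 ∧ ∀ b' ∈ T.erase b, g b' = 0 := by
        intro b hb
        have hni := hex b hb
        rw [Function.not_injective_iff] at hni
        obtain ⟨x, y, hxy, hne⟩ := hni
        have hz : ∀ b' ∈ T.erase b, ((x : β → K) - (y : β → K)) b' = 0 := by
          intro b' hb'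
          have := congrFun hxy ⟨b', hb'⟩
          simpa [resMap, sub_eq_zero] using this
        refine ⟨(x : β → K) - (y : β → K), sub_mem x.2 y.2, ?_, hz⟩
        intro h0
        apply hne
        have hzero : resMap H T (x - y) = 0 := by
          ext ⟨b', hb'⟩
          by_cases hbb : b' = b
          · subst hbb; exact h0
          · exact hz b' (Finset.mem_erase.2 ⟨hbb, hb'⟩)
        have : x - y = 0 := by
          apply hinj
          rw [hzero, map_zero]
        exact sub_eq_zero.1 (by exact_mod_cast congrArg Subtype.val this)
      choose g hgH hgb hgz using hchoice
      set h : β → K := ∑ b ∈ T.attach, (g b.1 b.2 b.1)⁻¹ • g b.1 b.2 with hh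
      have hhH : h ∈ H := Submodule.sum_mem _ (fun b _ => Submodule.smul_mem _ _ (hgH b.1 b.2))
      have hones : ∀ b ∈ T, h b = 1 := by
        intro b hb
        rw [hh]
        simp only [Finset.sum_apply, Pi.smul_apply, smul_eq_mul]
        rw [Finset.sum_eq_single (⟨b, hb⟩ : {x // x ∈ T})]
        · exact inv_mul_cancel₀ (hgb b hb)
        · intro c _ hc
          rw [hgz c.1 c.2 b (Finset.mem_erase.2 ⟨fun e => hc (by simpa [Subtype.ext_iff] using e.symm), hb⟩), mul_zero]
        · intro hb'; exact absurd (mem_attach _ _) hb'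
      refine ⟨h, hhH, ?_⟩
      have h1 : finrank K H ≤ T.card := by
        have := LinearMap.finrank_le_finrank_of_injective hinj
        rwa [finrank_pi, Fintype.card_coe] at this
      refine h1.trans (Finset.card_le_card ?_)
      intro b hb
      simp only [mem_filter, mem_univ, true_and]
      rw [hones b hb]; exact one_ne_zero

/-- extension by zero -/
def extMap (S : Finset β) : (↥S → K) →ₗ[K] (β → K) where
  toFun φ := fun b => if hb : b ∈ S then φ ⟨b, hb⟩ else 0
  map_add' φ ψ := by ext b; by_cases hb : b ∈ S <;> simp [hb]
  map_smul' r φ := by ext b; by_cases hb : b ∈ S <;> simp [hb]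

theorem exists_orthogonal (S : Finset β) (ι₀ : Type*) [Fintype ι₀] (f : ι₀ → β → K) :
    ∃ h : β → K, (∀ b, b ∉ S → h b = 0) ∧ (∀ s, ∑ b, f s b * h b = 0) ∧
      S.card ≤ (univ.filter (fun b => (h b ≠ 0 : Prop))).card + Fintype.card ι₀ := by
  have hEinj : Function.Injective (extMap (K := K) S) := by
    intro φ ψ h
    ext ⟨b, hb⟩
    have := congrFun h b
    simpa [extMap, hb] using this
  have hsum : ∀ (φ : ↥S → K) (v : β → K),
      ∑ b, v b * extMap S φ b = ∑ b : ↥S, v b.1 * φ b := by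
    intro φ v
    rw [← Finset.sum_subset (Finset.subset_univ S) (by intro b _ hb; simp [extMap, hb])]
    rw [← Finset.sum_coe_sort (s := S) (f := fun b => v b * extMap S φ b)]
    apply Finset.sum_congr rfl
    intro b _
    simp [extMap, b.2]
  set Θ : (↥S → K) →ₗ[K] (ι₀ → K) :=
    { toFun := fun φ s => ∑ b : ↥S, f s b.1 * φ b
      map_add' := by intro φ ψ; ext s; simp [mul_add, Finset.sum_add_distrib]
      map_smul' := by intro r φ; ext s; simp [Finset.mul_sum]; apply Finset.sum_congr rfl; intros; ring } with hΘ
  set H : Submodule K (β → K) := (LinearMap.ker Θ).map (extMap S) with hH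
  obtain ⟨h, hhH, hrank⟩ := exists_big_support H
  obtain ⟨φ, hφker, hφh⟩ := Submodule.mem_map.1 hhH
  refine ⟨h, ?_, ?_, ?_⟩
  · intro b hb
    rw [← hφh]; simp [extMap, hb]
  · intro s
    rw [← hφh, hsum]
    have := congrFun (LinearMap.mem_ker.1 hφker) s
    exact this
  · have e1 : finrank K H = finrank K (LinearMap.ker Θ) :=
      (LinearEquiv.finrank_eq (Submodule.equivMapOfInjective _ hEinj _)).symm
    have e2 := LinearMap.finrank_range_add_finrank_ker Θ
    rw [finrank_pi, Fintype.card_coe] at e2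
    have e3 : finrank K (LinearMap.range Θ) ≤ Fintype.card ι₀ := by
      have := Submodule.finrank_le (LinearMap.range Θ)
      rwa [finrank_pi] at this
    omega

theorem diag_card_le : ∀ (k : ℕ) (α : Type u) [Fintype α] [DecidableEq α]
    (ι : Type u) [Fintype ι] (co : ι → Fin (k+2)) (f : ι → α → K) (g : ι → (Fin (k+2) → α) → K),
    (∀ s (x y : Fin (k+2) → α), (∀ i, i ≠ co s → x i = y i) → g s x = g s y) →
    ∀ (S : Finset α) (c : α → K), (∀ a ∈ S, c a ≠ 0) →
    (∀ x : Fin (k+2) → α, ∑ s, f s (x (co s)) * g s x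
      = ∑ a ∈ S, c a * ∏ i, (if x i = a then 1 else 0)) →
    S.card ≤ Fintype.card ι := by
  intro k
  induction k with
  | zero =>
    intro α _ _ ι _ co f g hg S c hc hF
    rcases S.eq_empty_or_nonempty with rfl | ⟨a₀, ha₀⟩
    · simp
    have : Nonempty α := ⟨a₀⟩
    set d : α := Classical.arbitrary α with hd
    set U : ι → α → K := fun s a => if co s = 0 then f s a else g s ![a, d] with hU
    set V : ι → α → K := fun s a => if co s = 0 then g s ![d, a] else f s a with hV
    have hUV : ∀ s (x : Fin 2 → α), f s (x (co s)) * g s x = U s (x 0) * V s (x 1) := by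
      intro s x
      by_cases h0 : co s = 0
      · have hgx : g s x = g s ![d, x 1] := by
          apply hg
          intro i hi
          fin_cases i
          · exact absurd h0.symm hi
          · rfl
        rw [h0, hgx]
        simp [hU, hV, h0]
      · have h0' : (co s).val ≠ 0 := fun h => h0 (Fin.ext h)
        have h1 : co s = 1 := by rw [Fin.ext_iff]; simp; omega
        have hgx : g s x = g s ![x 0, d] := by
          apply hg
          intro i hi
          fin_cases i
          · rfl
          · rw [h1] at hi; exact absurd rfl hi
        rw [h1, hgx]
        simp [hU, hV, h0]
        ring
    obtain ⟨h, hsupp, horth, hcard⟩ := exists_orthogonal S ι U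
    have hzero : ∀ b, h b = 0 := by
      intro b
      by_cases hb : b ∈ S
      · have E1 : ∀ s, ∑ x : α, f s ((![x, b]) (co s)) * g s ![x, b] * h x = 0 := by
          intro s
          have e : ∀ x : α, f s ((![x, b]) (co s)) * g s ![x, b] * h x = V s b * (U s x * h x) := by
            intro x
            rw [hUV s ![x, b]]
            show U s x * V s b * h x = _
            ring
          simp_rw [e]
          rw [← Finset.mul_sum, horth s, mul_zero]
        have key : (0 : K) = c b * h b := by
          calc (0 : K) = ∑ s : ι, ∑ x : α, f s ((![x, b]) (co s)) * g s ![x, b] * h x := by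
                rw [Finset.sum_eq_zero (fun s _ => E1 s)]
            _ = ∑ x : α, (∑ s : ι, f s ((![x, b]) (co s)) * g s ![x, b]) * h x := by
                rw [Finset.sum_comm]
                exact Finset.sum_congr rfl (fun x _ => (Finset.sum_mul _ _ _).symm)
            _ = ∑ x : α, (∑ a ∈ S, c a * ∏ i : Fin 2, (if (![x, b]) i = a then 1 else 0)) * h x := by
                exact Finset.sum_congr rfl (fun x _ => by rw [hF ![x, b]])
            _ = ∑ a ∈ S, ∑ x : α, c a * ((if x = a then 1 else 0) * (if b = a then 1 else 0)) * h x := by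
                rw [← Finset.sum_comm]
                apply Finset.sum_congr rfl
                intro x _
                rw [Finset.sum_mul]
                apply Finset.sum_congr rfl
                intro a _
                rw [Fin.prod_univ_two]
                simp only [Matrix.cons_val_zero, Matrix.cons_val_one, Matrix.head_cons]
                rfl
            _ = ∑ a ∈ S, c a * (if b = a then 1 else 0) * h a := by
                apply Finset.sum_congr rfl
                intro a _
                rw [Finset.sum_eq_single a]
                · simp
                · intro x _ hx; simp [hx]
                · intro hx; exact absurd (mem_univ a) hx
            _ = c b * h b := by
                rw [Finset.sum_eq_single_of_mem b hb]
                · simp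
                · intro a _ hab
                  simp [Ne.symm hab]
        by_contra hne
        exact (hc b hb) (by
          have := key.symm
          rcases mul_eq_zero.1 this with h1 | h2
          · exact h1
          · exact absurd h2 hne)
      · exact hsupp b hb
    have : (univ.filter (fun b => (h b ≠ 0 : Prop))) = ∅ := by
      apply Finset.filter_eq_empty_iff.2
      intro b _
      simp [hzero b]
    rw [this] at hcard
    simpa using hcard
  | succ k ih =>
    intro α _ _ ι _ co f g hg S c hc hF
    rcases S.eq_empty_or_nonempty with rfl | ⟨a₀, ha₀⟩
    · simp
    have hne : Nonempty α := ⟨a₀⟩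
    set L : Fin (k+3) := Fin.last (k+2) with hL
    obtain ⟨h, hsupp, horth, hcard⟩ :=
      exists_orthogonal S {s : ι // co s = L} (fun s => f s.1)
    set S' := S.filter (fun a => (h a ≠ 0 : Prop)) with hS'
    set co' : {s : ι // co s ≠ L} → Fin (k+2) := fun s => (co s.1).castPred s.2 with hco'
    set g' : {s : ι // co s ≠ L} → (Fin (k+2) → α) → K :=
      fun s y => ∑ b : α, g s.1 (Fin.snoc y b) * h b with hg'def
    have hcastco : ∀ (s : {s : ι // co s ≠ L}) (y : Fin (k+2) → α) (b : α),
        (Fin.snoc y b : Fin (k+3) → α) (co s.1) = y (co' s) := by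
      intro s y b
      conv_lhs => rw [← Fin.castSucc_castPred (co s.1) s.2]
      rw [Fin.snoc_castSucc]
    have hg' : ∀ s (x y : Fin (k+2) → α), (∀ i, i ≠ co' s → x i = y i) → g' s x = g' s y := by
      intro s x y hxy
      apply Finset.sum_congr rfl
      intro b _
      congr 1
      apply hg
      intro i hi
      rcases Fin.eq_castSucc_or_eq_last i with ⟨j, rfl⟩ | rfl
      · rw [Fin.snoc_castSucc, Fin.snoc_castSucc]
        apply hxy
        intro hj
        apply hi
        rw [hj, Fin.castSucc_castPred]
      · rw [Fin.snoc_last, Fin.snoc_last]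
    have hF' : ∀ y : Fin (k+2) → α, ∑ s : {s : ι // co s ≠ L}, f s.1 (y (co' s)) * g' s y
        = ∑ a ∈ S', (c a * h a) * ∏ i, (if y i = a then 1 else 0) := by
      intro y
      have base : ∑ b : α, (∑ s : ι, f s ((Fin.snoc y b : Fin (k+3) → α) (co s))
            * g s (Fin.snoc y b)) * h b
          = ∑ b : α, (∑ a ∈ S, c a
            * ∏ i : Fin (k+3), (if (Fin.snoc y b : Fin (k+3) → α) i = a then 1 else 0)) * h b :=
        Finset.sum_congr rfl (fun b _ => by rw [hF (Fin.snoc y b)])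
      set d : α := Classical.arbitrary α with hd
      set A : ι → α → K := fun s b => f s ((Fin.snoc y b : Fin (k+3) → α) (co s))
        * g s (Fin.snoc y b) with hA
      have inner0 : ∀ s : ι, co s = L → ∑ b : α, A s b * h b = 0 := by
        intro s hs
        have e : ∀ b : α, A s b * h b
            = g s (Fin.snoc y d) * (f s b * h b) := by
          intro b
          have e1 : (Fin.snoc y b : Fin (k+3) → α) (co s) = b := by
            rw [hs, hL, Fin.snoc_last]
          have e2 : g s (Fin.snoc y b) = g s (Fin.snoc y d) := by
            apply hg
            intro i hi
            rw [hs, hL] at hi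
            rcases Fin.eq_castSucc_or_eq_last i with ⟨j, rfl⟩ | rfl
            · rw [Fin.snoc_castSucc, Fin.snoc_castSucc]
            · exact absurd rfl hi
          rw [hA]
          simp only
          rw [e1, e2]
          ring
        simp_rw [e]
        rw [← Finset.mul_sum, horth ⟨s, hs⟩, mul_zero]
      have lhs_eq : ∑ b : α, (∑ s : ι, A s b) * h b
          = ∑ s : {s : ι // co s ≠ L}, f s.1 (y (co' s)) * g' s y := by
        calc ∑ b : α, (∑ s : ι, A s b) * h b
            = ∑ b : α, ∑ s : ι, A s b * h b :=
              Finset.sum_congr rfl (fun b _ => Finset.sum_mul _ _ _)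
          _ = ∑ s : ι, ∑ b : α, A s b * h b := Finset.sum_comm
          _ = (∑ s ∈ univ.filter (fun s => co s = L), ∑ b : α, A s b * h b)
              + ∑ s ∈ univ.filter (fun s => ¬ co s = L), ∑ b : α, A s b * h b :=
              (Finset.sum_filter_add_sum_filter_not univ _ _).symm
          _ = ∑ s ∈ univ.filter (fun s => ¬ co s = L), ∑ b : α, A s b * h b := by
              rw [Finset.sum_eq_zero, zero_add]
              intro s hsmem
              exact inner0 s (by simpa using hsmem)
          _ = ∑ s : {s : ι // ¬ co s = L}, ∑ b : α, A s.1 b * h b :=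
              Finset.sum_subtype _ (by simp) _
          _ = ∑ s : {s : ι // co s ≠ L}, f s.1 (y (co' s)) * g' s y := by
              apply Finset.sum_congr rfl
              intro s _
              have e : ∀ b : α, A s.1 b * h b
                  = f s.1 (y (co' s)) * (g s.1 (Fin.snoc y b) * h b) := by
                intro b
                rw [hA]
                simp only
                rw [hcastco s y b]
                ring
              simp_rw [e]
              rw [← Finset.mul_sum]
      have rhs_eq : ∑ b : α, (∑ a ∈ S, c a
            * ∏ i : Fin (k+3), (if (Fin.snoc y b : Fin (k+3) → α) i = a then 1 else 0)) * h b
          = ∑ a ∈ S', (c a * h a) * ∏ i : Fin (k+2), (if y i = a then 1 else 0) := by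
        have prodsplit : ∀ (b : α) (a : α),
            (∏ i : Fin (k+3), (if (Fin.snoc y b : Fin (k+3) → α) i = a then 1 else 0) : K)
            = (∏ i : Fin (k+2), (if y i = a then 1 else 0)) * (if b = a then 1 else 0) := by
          intro b a
          rw [Fin.prod_univ_castSucc]
          congr 1
          · apply Finset.prod_congr rfl
            intro i _
            rw [Fin.snoc_castSucc]
          · rw [Fin.snoc_last]
        calc ∑ b : α, (∑ a ∈ S, c a
              * ∏ i : Fin (k+3), (if (Fin.snoc y b : Fin (k+3) → α) i = a then 1 else 0)) * h b
            = ∑ b : α, ∑ a ∈ S, (c a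
              * ((∏ i : Fin (k+2), (if y i = a then 1 else 0)) * (if b = a then 1 else 0))) * h b := by
              apply Finset.sum_congr rfl
              intro b _
              rw [Finset.sum_mul]
              apply Finset.sum_congr rfl
              intro a _
              rw [prodsplit b a]
          _ = ∑ a ∈ S, ∑ b : α, (c a
              * ((∏ i : Fin (k+2), (if y i = a then 1 else 0)) * (if b = a then 1 else 0))) * h b :=
              Finset.sum_comm
          _ = ∑ a ∈ S, (c a * h a) * ∏ i : Fin (k+2), (if y i = a then 1 else 0) := by
              apply Finset.sum_congr rfl
              intro a _
              rw [Finset.sum_eq_single a]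
              · simp only [if_true, eq_self_iff_true, mul_one]
                ring
              · intro b _ hb; simp [hb]
              · intro hb; exact absurd (mem_univ a) hb
          _ = ∑ a ∈ S', (c a * h a) * ∏ i : Fin (k+2), (if y i = a then 1 else 0) := by
              rw [← Finset.sum_subset (Finset.filter_subset (fun a => (h a ≠ 0 : Prop)) S)]
              intro a haS haS'
              have : h a = 0 := by
                by_contra hha
                exact haS' (Finset.mem_filter.2 ⟨haS, hha⟩)
              rw [this]
              ring
      rw [lhs_eq, rhs_eq] at base
      exact base
    -- apply the inductive hypothesis
    have hIH := ih α {s : ι // co s ≠ L} co' (fun s => f s.1) g' hg' S'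
      (fun a => c a * h a)
      (by
        intro a haS'
        rcases Finset.mem_filter.1 haS' with ⟨haS, hha⟩
        exact mul_ne_zero (hc a haS) hha)
      hF'
    have hfilt : univ.filter (fun b => (h b ≠ 0 : Prop)) = S' := by
      ext b
      simp only [hS', mem_filter, mem_univ, true_and]
      constructor
      · intro hb
        refine ⟨?_, hb⟩
        by_contra hbS
        exact hb (hsupp b hbS)
      · exact fun hb => hb.2
    rw [hfilt] at hcard
    have hcompl : Fintype.card {s : ι // co s ≠ L}
        = Fintype.card ι - Fintype.card {s : ι // co s = L} :=
      Fintype.card_subtype_compl _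
    have hle := Fintype.card_subtype_le (fun s : ι => co s = L)
    omega

set_option linter.unusedSectionVars false

variable (p : ℕ) [Fact p.Prime]

/-- reduced exponent -/
def rnat (e : ℕ) : ℕ := if e ≤ p - 1 then e else (e - 1) % (p - 1) + 1

lemma p_two : 2 ≤ p := (Fact.out : p.Prime).two_le

lemma rnat_le (e : ℕ) : rnat p e ≤ e := by
  unfold rnat
  split
  · exact le_refl e
  · have := Nat.mod_le (e - 1) (p - 1)
    omega

lemma rnat_lt (e : ℕ) : rnat p e < p := by
  have h2 := p_two p
  unfold rnat
  split
  · omega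
  · have := Nat.mod_lt (e - 1) (y := p - 1) (by omega)
    omega

lemma rnat_sub (e : ℕ) (he : p ≤ e) : rnat p e = rnat p (e - (p - 1)) := by
  have h2 := p_two p
  have key : (e - 1) % (p - 1) = (e - p) % (p - 1) := by
    have : e - 1 = (p - 1) + (e - p) := by omega
    rw [this, Nat.add_mod_left]
  unfold rnat
  by_cases h : e - (p - 1) ≤ p - 1
  · rw [if_neg (by omega), if_pos h]
    have : (e - p) % (p - 1) = e - p := Nat.mod_eq_of_lt (by omega)
    omega
  · rw [if_neg (by omega), if_neg h]
    have : e - (p - 1) - 1 = e - p := by omega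
    rw [this, key]

lemma pow_rnat (c : ZMod p) (e : ℕ) : c ^ e = c ^ rnat p e := by
  have h2 := p_two p
  induction e using Nat.strong_induction_on with
  | _ e ih =>
    by_cases he : e ≤ p - 1
    · rw [rnat, if_pos he]
    · have hpe : p ≤ e := by omega
      have step : c ^ e = c ^ (e - (p - 1)) := by
        by_cases hc : c = 0
        · subst hc
          rw [zero_pow (by omega), zero_pow (by omega)]
        · have h1 : c ^ (p - 1) = 1 := ZMod.pow_card_sub_one_eq_one hc
          calc c ^ e = c ^ (e - (p - 1)) * c ^ (p - 1) := by
                rw [← pow_add]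
                congr 1
                omega
            _ = c ^ (e - (p - 1)) := by rw [h1, mul_one]
      rw [step, ih (e - (p - 1)) (by omega), rnat_sub p e hpe]

set_option linter.unusedSectionVars false

variable (k n : ℕ)

/-- reduced exponent as `Fin p` -/
def rf (e : ℕ) : Fin p := ⟨rnat p e, rnat_lt p e⟩

abbrev RR := (Fin k → Fin n → ZMod p) → ZMod p

/-- monomial function -/
def mon (d : Fin k × Fin n → Fin p) : RR p k n := fun x => ∏ v, (x v.1 v.2) ^ (d v : ℕ)

/-- generators of total (reduced) degree at most `D` -/
def MSet (D : ℕ) : Set (RR p k n) := {f | ∃ d, (∑ v, (d v : ℕ)) ≤ D ∧ f = mon p k n d}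

/-- span of reduced monomials of degree at most `D` -/
def SP (D : ℕ) : Submodule (ZMod p) (RR p k n) := Submodule.span (ZMod p) (MSet p k n D)

lemma mon_mul (d d' : Fin k × Fin n → Fin p) :
    mon p k n d * mon p k n d' = mon p k n (fun v => rf p ((d v : ℕ) + (d' v : ℕ))) := by
  funext x
  show (∏ v, (x v.1 v.2) ^ (d v : ℕ)) * (∏ v, (x v.1 v.2) ^ (d' v : ℕ)) = _
  rw [← Finset.prod_mul_distrib]
  apply Finset.prod_congr rfl
  intro v _
  rw [← pow_add]
  exact pow_rnat p _ _

lemma SP_mono {D E : ℕ} (h : D ≤ E) : SP p k n D ≤ SP p k n E :=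
  Submodule.span_mono (fun f ⟨d, hd, hf⟩ => ⟨d, hd.trans h, hf⟩)

lemma SP_mul {D E : ℕ} {x y : RR p k n} (hx : x ∈ SP p k n D) (hy : y ∈ SP p k n E) :
    x * y ∈ SP p k n (D + E) := by
  have hle : SP p k n D * SP p k n E ≤ SP p k n (D + E) := by
    rw [SP, SP, Submodule.span_mul_span]
    apply Submodule.span_le.2
    rintro f hf
    rcases Set.mem_mul.1 hf with ⟨u, hu, w, hw, rfl⟩
    rcases hu with ⟨d, hd, rfl⟩
    rcases hw with ⟨d', hd', rfl⟩
    apply Submodule.subset_span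
    refine ⟨fun v => rf p ((d v : ℕ) + (d' v : ℕ)), ?_, mon_mul p k n d d'⟩
    calc ∑ v, ((rf p ((d v : ℕ) + (d' v : ℕ)) : Fin p) : ℕ)
        ≤ ∑ v, ((d v : ℕ) + (d' v : ℕ)) := Finset.sum_le_sum (fun v _ => rnat_le p _)
      _ = (∑ v, (d v : ℕ)) + ∑ v, (d' v : ℕ) := Finset.sum_add_distrib
      _ ≤ D + E := Nat.add_le_add hd hd'
  exact hle (Submodule.mul_mem_mul hx hy)

lemma one_mem_SP : (1 : RR p k n) ∈ SP p k n 0 := by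
  apply Submodule.subset_span
  refine ⟨fun _ => 0, by simp, ?_⟩
  funext x
  show (1 : ZMod p) = ∏ v : Fin k × Fin n, (x v.1 v.2) ^ ((0 : Fin p) : ℕ)
  simp

lemma proj_mem_SP (i : Fin k) (l : Fin n) : (fun x => x i l : RR p k n) ∈ SP p k n 1 := by
  have h2 := p_two p
  apply Submodule.subset_span
  set d : Fin k × Fin n → Fin p := fun v => if v = (i, l) then ⟨1, by omega⟩ else ⟨0, by omega⟩ with hd
  refine ⟨d, ?_, ?_⟩
  · rw [Finset.sum_eq_single (i, l)]
    · simp [hd]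
    · intro v _ hv; simp [hd, hv]
    · intro hv; exact absurd (mem_univ _) hv
  · funext x
    show x i l = ∏ v : Fin k × Fin n, (x v.1 v.2) ^ (d v : ℕ)
    rw [Finset.prod_eq_single (i, l)]
    · simp [hd]
    · intro v _ hv; simp [hd, hv]
    · intro hv; exact absurd (mem_univ _) hv

lemma pow_mem_SP {x : RR p k n} (hx : x ∈ SP p k n 1) (t : ℕ) : x ^ t ∈ SP p k n t := by
  induction t with
  | zero => rw [pow_zero]; exact one_mem_SP p k n
  | succ t ih =>
    rw [pow_succ]
    exact SP_mul p k n ih hx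

lemma prod_mem_SP {β : Type*} [DecidableEq β] (s : Finset β) (u : β → RR p k n) (e : ℕ)
    (h : ∀ b ∈ s, u b ∈ SP p k n e) : (∏ b ∈ s, u b) ∈ SP p k n (s.card * e) := by
  induction s using Finset.induction_on with
  | empty => simpa using one_mem_SP p k n
  | @insert b s hb ih =>
    rw [Finset.prod_insert hb, Finset.card_insert_of_notMem hb]
    have : (s.card + 1) * e = e + s.card * e := by ring
    rw [this]
    exact SP_mul p k n (h b (mem_insert_self b s)) (ih (fun b' hb' => h b' (mem_insert_of_mem hb')))

variable (m : ℕ) (a : Fin m → Fin k → ZMod p)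

/-- the product polynomial detecting solutions -/
def GG : RR p k n := ∏ w : Fin m × Fin n,
  (1 - (∑ i : Fin k, fun x : Fin k → Fin n → ZMod p => a w.1 i * x i w.2) ^ (p - 1))

lemma GG_mem : GG p k n m a ∈ SP p k n ((m * n) * (p - 1)) := by
  have hcard : (univ : Finset (Fin m × Fin n)).card = m * n := by simp
  rw [GG, ← hcard]
  apply prod_mem_SP
  intro w _
  apply sub_mem
  · exact SP_mono p k n (Nat.zero_le _) (one_mem_SP p k n)
  · apply pow_mem_SP
    apply Submodule.sum_mem
    intro i _
    have : (fun x : Fin k → Fin n → ZMod p => a w.1 i * x i w.2)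
        = a w.1 i • (fun x : Fin k → Fin n → ZMod p => x i w.2) := by
      funext x; simp
    rw [this]
    exact Submodule.smul_mem _ _ (proj_mem_SP p k n i w.2)

lemma GG_val (x : Fin k → Fin n → ZMod p) :
    GG p k n m a x = if (∀ j, ∑ i : Fin k, a j i • x i = 0) then 1 else 0 := by
  have h2 := p_two p
  have factor : ∀ w : Fin m × Fin n,
      ((1 : RR p k n) - (∑ i : Fin k, fun y : Fin k → Fin n → ZMod p => a w.1 i * y i w.2) ^ (p - 1)) x
      = if (∑ i : Fin k, a w.1 i * x i w.2) = 0 then 1 else 0 := by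
    intro w
    have : ((∑ i : Fin k, fun y : Fin k → Fin n → ZMod p => a w.1 i * y i w.2) ^ (p - 1)) x
        = (∑ i : Fin k, a w.1 i * x i w.2) ^ (p - 1) := by
      have e1 : (∑ i : Fin k, fun y : Fin k → Fin n → ZMod p => a w.1 i * y i w.2) x
          = ∑ i : Fin k, a w.1 i * x i w.2 := by
        simp [Finset.sum_apply]
      rw [Pi.pow_apply, e1]
    show (1 : ZMod p) - _ = _
    rw [this]
    by_cases hc : (∑ i : Fin k, a w.1 i * x i w.2) = 0
    · rw [if_pos hc, hc, zero_pow (by omega), sub_zero]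
    · rw [if_neg hc, ZMod.pow_card_sub_one_eq_one hc, sub_self]
  have hGx : GG p k n m a x = ∏ w : Fin m × Fin n,
      (if (∑ i : Fin k, a w.1 i * x i w.2) = 0 then (1:ZMod p) else 0) := by
    rw [GG, Finset.prod_apply]
    exact Finset.prod_congr rfl (fun w _ => factor w)
  rw [hGx]
  by_cases hall : ∀ j, ∑ i : Fin k, a j i • x i = 0
  · rw [if_pos hall]
    apply Finset.prod_eq_one
    intro w _
    rw [if_pos]
    have := congrFun (hall w.1) w.2
    simpa [Finset.sum_apply] using this
  · rw [if_neg hall]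
    push_neg at hall
    obtain ⟨j, hj⟩ := hall
    have : ∃ l, ∑ i : Fin k, a j i * x i l ≠ 0 := by
      by_contra hl
      push_neg at hl
      apply hj
      funext l
      simpa [Finset.sum_apply] using hl l
    obtain ⟨l, hl⟩ := this
    exact Finset.prod_eq_zero (mem_univ (j, l)) (by rw [if_neg hl])

omit [Fact p.Prime] in
lemma prod_row {M : Type*} [CommMonoid M] (i₀ : Fin k) (t : Fin k × Fin n → M) :
    ∏ v ∈ univ.filter (fun v : Fin k × Fin n => v.1 = i₀), t v = ∏ l, t (i₀, l) := by
  rw [Finset.prod_filter, Fintype.prod_prod_type]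
  rw [Finset.prod_eq_single i₀]
  · apply Finset.prod_congr rfl
    intro l _
    rw [if_pos rfl]
  · intro i _ hi
    apply Finset.prod_eq_one
    intro l _
    exact if_neg hi
  · intro hi; exact absurd (mem_univ _) hi

theorem key_bound (p m k n : ℕ) [Fact p.Prime] (hk3 : 3 ≤ k) (a : Fin m → Fin k → ZMod p)
    (ha : ∀ j, ∑ i : Fin k, a j i = 0) (A : Finset (Fin n → ZMod p))
    (hnosol : ¬ ∃ x : Fin k → (Fin n → ZMod p), (∀ i, x i ∈ A) ∧
      (∀ j : Fin m, ∑ i : Fin k, a j i • x i = 0) ∧ ¬ (∀ i i' : Fin k, x i = x i')) :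
    A.card ≤ k * Fintype.card {e : Fin n → Fin p // ∑ l, (e l : ℕ) ≤ (m*n)*(p-1)/k} := by
  classical
  obtain ⟨k₀, rfl⟩ : ∃ k₀, k = k₀ + 2 := ⟨k - 2, by omega⟩
  set D := (m*n)*(p-1) with hD
  set TD := {d : Fin (k₀+2) × Fin n → Fin p // (∑ v, (d v : ℕ)) ≤ D} with hTD
  have hMset : MSet p (k₀+2) n D = Set.range (fun dd : TD => mon p (k₀+2) n dd.1) := by
    ext f
    constructor
    · rintro ⟨d, hd, rfl⟩; exact ⟨⟨d, hd⟩, rfl⟩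
    · rintro ⟨dd, rfl⟩; exact ⟨dd.1, dd.2, rfl⟩
  have hGmem : GG p (k₀+2) n m a ∈ SP p (k₀+2) n D := GG_mem p (k₀+2) n m a
  rw [SP, hMset, Submodule.mem_span_range_iff_exists_fun] at hGmem
  obtain ⟨cc, hcc⟩ := hGmem
  have hex : ∀ dd : TD, ∃ i : Fin (k₀+2), ∀ i' : Fin (k₀+2),
      (∑ l, (dd.1 (i, l) : ℕ)) ≤ ∑ l, (dd.1 (i', l) : ℕ) := by
    intro dd
    obtain ⟨i, _, hi⟩ := Finset.exists_min_image univ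
      (fun i : Fin (k₀+2) => ∑ l, (dd.1 (i, l) : ℕ)) ⟨0, mem_univ 0⟩
    exact ⟨i, fun i' => hi i' (mem_univ i')⟩
  choose imin himin using hex
  have hminle : ∀ dd : TD, (∑ l, (dd.1 (imin dd, l) : ℕ)) ≤ D / (k₀+2) := by
    intro dd
    rw [Nat.le_div_iff_mul_le (by omega : 0 < k₀+2)]
    calc (∑ l, (dd.1 (imin dd, l) : ℕ)) * (k₀+2)
        = ∑ _i : Fin (k₀+2), ∑ l, (dd.1 (imin dd, l) : ℕ) := by
          rw [Finset.sum_const, card_univ, Fintype.card_fin, smul_eq_mul, mul_comm]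
      _ ≤ ∑ i : Fin (k₀+2), ∑ l, (dd.1 (i, l) : ℕ) := Finset.sum_le_sum (fun i _ => himin dd i)
      _ = ∑ v : Fin (k₀+2) × Fin n, (dd.1 v : ℕ) :=
          (Fintype.sum_prod_type (f := fun v : Fin (k₀+2) × Fin n => (dd.1 v : ℕ))).symm
      _ ≤ D := dd.2
  set α := {x // x ∈ A} with hα
  set ι := Fin (k₀+2) × {e : Fin n → Fin p // ∑ l, (e l : ℕ) ≤ D / (k₀+2)} with hι
  set co : ι → Fin (k₀+2) := Prod.fst with hco
  set f : ι → α → ZMod p := fun s b => ∏ l, (b.1 l) ^ (s.2.1 l : ℕ) with hf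
  set g : ι → (Fin (k₀+2) → α) → ZMod p := fun s x => ∑ dd : TD,
    (if imin dd = s.1 ∧ (fun l => dd.1 (s.1, l)) = s.2.1 then cc dd else 0)
      * ∏ v ∈ univ.filter (fun v : Fin (k₀+2) × Fin n => v.1 ≠ s.1), ((x v.1).1 v.2) ^ (dd.1 v : ℕ)
    with hgdef
  have hg : ∀ s (x y : Fin (k₀+2) → α), (∀ i, i ≠ co s → x i = y i) → g s x = g s y := by
    intro s x y hxy
    apply Finset.sum_congr rfl
    intro dd _
    congr 1
    apply Finset.prod_congr rfl
    intro v hv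
    rw [hxy v.1 (Finset.mem_filter.1 hv).2]
  have hF : ∀ x : Fin (k₀+2) → α, ∑ s : ι, f s (x (co s)) * g s x
      = ∑ b ∈ (univ : Finset α), (fun _ => (1 : ZMod p)) b * ∏ i, (if x i = b then 1 else 0) := by
    intro x
    set xc : Fin (k₀+2) → Fin n → ZMod p := fun i => (x i).1 with hxc
    have stepA : ∑ s : ι, f s (x (co s)) * g s x = GG p (k₀+2) n m a xc := by
      have e1 : ∀ s : ι, f s (x (co s)) * g s x = ∑ dd : TD,
          (if imin dd = s.1 ∧ (fun l => dd.1 (s.1, l)) = s.2.1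
            then cc dd * (f s (x s.1) * ∏ v ∈ univ.filter (fun v : Fin (k₀+2) × Fin n => v.1 ≠ s.1),
              ((x v.1).1 v.2) ^ (dd.1 v : ℕ)) else 0) := by
        intro s
        rw [hgdef]
        simp only
        rw [Finset.mul_sum]
        apply Finset.sum_congr rfl
        intro dd _
        by_cases hcond : imin dd = s.1 ∧ (fun l => dd.1 (s.1, l)) = s.2.1
        · rw [if_pos hcond, if_pos hcond]; ring
        · rw [if_neg hcond, if_neg hcond]; ring
      rw [Finset.sum_congr rfl (fun s _ => e1 s), Finset.sum_comm]
      have e2 : ∀ dd : TD, ∑ s : ι,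
          (if imin dd = s.1 ∧ (fun l => dd.1 (s.1, l)) = s.2.1
            then cc dd * (f s (x s.1) * ∏ v ∈ univ.filter (fun v : Fin (k₀+2) × Fin n => v.1 ≠ s.1),
              ((x v.1).1 v.2) ^ (dd.1 v : ℕ)) else 0)
          = cc dd * mon p (k₀+2) n dd.1 xc := by
        intro dd
        set s₀ : ι := (imin dd, ⟨fun l => dd.1 (imin dd, l), hminle dd⟩) with hs₀
        rw [Finset.sum_eq_single s₀]
        · rw [if_pos ⟨rfl, rfl⟩]
          have hsplit : mon p (k₀+2) n dd.1 xc
              = (∏ v ∈ univ.filter (fun v : Fin (k₀+2) × Fin n => v.1 = imin dd),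
                  (xc v.1 v.2) ^ (dd.1 v : ℕ))
              * ∏ v ∈ univ.filter (fun v : Fin (k₀+2) × Fin n => ¬ v.1 = imin dd),
                  (xc v.1 v.2) ^ (dd.1 v : ℕ) :=
            (Finset.prod_filter_mul_prod_filter_not univ _ _).symm
          rw [hsplit, prod_row]
        · rintro ⟨s1, s2⟩ _ hs
          apply if_neg
          rintro ⟨h1, h2⟩
          apply hs
          subst h1
          exact Prod.ext rfl (Subtype.ext h2.symm)
        · intro hs; exact absurd (mem_univ _) hs
      rw [Finset.sum_congr rfl (fun dd _ => e2 dd)]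
      have e3 : ∀ dd : TD, cc dd * mon p (k₀+2) n dd.1 xc = (cc dd • mon p (k₀+2) n dd.1) xc := by
        intro dd; simp
      rw [Finset.sum_congr rfl (fun dd _ => e3 dd), ← Finset.sum_apply, hcc]
    rw [stepA, GG_val]
    by_cases hconst : ∀ i i' : Fin (k₀+2), x i = x i'
    · rw [if_pos]
      · rw [Finset.sum_eq_single (x 0)]
        · simp only [one_mul]
          apply (Finset.prod_eq_one ?_).symm
          intro i _
          rw [if_pos (hconst i 0)]
        · intro b _ hb
          rw [one_mul]
          exact Finset.prod_eq_zero (mem_univ 0) (if_neg (fun h => hb h.symm))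
        · intro hb; exact absurd (mem_univ _) hb
      · intro j
        have e : ∀ i, xc i = xc 0 := fun i => congrArg Subtype.val (hconst i 0)
        calc ∑ i : Fin (k₀+2), a j i • xc i = ∑ i : Fin (k₀+2), a j i • xc 0 :=
              Finset.sum_congr rfl (fun i _ => by rw [e i])
          _ = (∑ i : Fin (k₀+2), a j i) • xc 0 := (Finset.sum_smul).symm
          _ = 0 := by rw [ha j, zero_smul]
    · rw [if_neg]
      · symm
        apply Finset.sum_eq_zero
        intro b _
        rw [one_mul]
        have hex2 : ∃ i, x i ≠ b := by
          by_contra hxi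
          push_neg at hxi
          exact hconst (fun i i' => (hxi i).trans (hxi i').symm)
        obtain ⟨i, hi⟩ := hex2
        exact Finset.prod_eq_zero (mem_univ i) (if_neg hi)
      · intro hsys
        apply hnosol
        refine ⟨xc, fun i => (x i).2, hsys, ?_⟩
        intro hcc'
        apply hconst
        intro i i'
        exact Subtype.ext (hcc' i i')
  have hdiag := diag_card_le (K := ZMod p) k₀ α ι co f g hg univ (fun _ => 1)
    (fun b _ => one_ne_zero) hF
  rw [card_univ] at hdiag
  have hcardα : Fintype.card α = A.card := Fintype.card_coe A
  have hcardι : Fintype.card ι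
      = (k₀+2) * Fintype.card {e : Fin n → Fin p // ∑ l, (e l : ℕ) ≤ D/(k₀+2)} := by
    exact (Fintype.card_congr (Equiv.cast hι)).trans (by rw [Fintype.card_prod, Fintype.card_fin])
  exact le_trans (le_of_eq hcardα.symm) (le_trans hdiag (le_of_eq hcardι))

section GammaFacts

variable (p m k : ℕ) [Fact p.Prime]

lemma fz_pos {z : ℝ} (hz : z ∈ Set.Ioc (0:ℝ) 1) :
    0 < (∑ i ∈ Finset.range p, z ^ i) / z ^ (((p - 1 : ℕ) * m : ℝ) / k) := by
  obtain ⟨hz0, hz1⟩ := hz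
  apply div_pos
  · have h2 := p_two p
    apply Finset.sum_pos
    · intro i _; positivity
    · exact ⟨0, Finset.mem_range.2 (by omega)⟩
  · exact Real.rpow_pos_of_pos hz0 _

lemma one_le_fz {z : ℝ} (hz : z ∈ Set.Ioc (0:ℝ) 1) :
    1 ≤ (∑ i ∈ Finset.range p, z ^ i) / z ^ (((p - 1 : ℕ) * m : ℝ) / k) := by
  obtain ⟨hz0, hz1⟩ := hz
  have h2 := p_two p
  rw [le_div_iff₀ (Real.rpow_pos_of_pos hz0 _), one_mul]
  calc z ^ (((p - 1 : ℕ) * m : ℝ) / k) ≤ 1 := by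
        apply Real.rpow_le_one (le_of_lt hz0) hz1
        positivity
    _ ≤ ∑ i ∈ Finset.range p, z ^ i := by
        have : (1:ℝ) = z ^ 0 := (pow_zero z).symm
        rw [this]
        apply Finset.single_le_sum (f := fun i => z ^ i)
        · intro i _; positivity
        · exact Finset.mem_range.2 (by omega)

lemma Gamma_im_nonempty : ((fun z : ℝ => (∑ i ∈ Finset.range p, z ^ i)
    / z ^ (((p - 1 : ℕ) * m : ℝ) / k)) '' Set.Ioc (0 : ℝ) 1).Nonempty :=
  ⟨_, Set.mem_image_of_mem _ ⟨zero_lt_one, le_refl 1⟩⟩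

lemma one_le_Gamma : 1 ≤ Gamma p m k := by
  apply le_csInf (Gamma_im_nonempty p m k)
  rintro b ⟨z, hz, rfl⟩
  exact one_le_fz p m k hz

lemma count_le_Gamma_pow (n : ℕ) (hk : 0 < k) :
    (Fintype.card {e : Fin n → Fin p // ∑ l, (e l : ℕ) ≤ (m*n)*(p-1)/k} : ℝ)
      ≤ (Gamma p m k) ^ n := by
  classical
  set M := Fintype.card {e : Fin n → Fin p // ∑ l, (e l : ℕ) ≤ (m*n)*(p-1)/k} with hM
  -- step 1 : for every z in Ioc 0 1, M ≤ (f z)^n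
  have step1 : ∀ z ∈ Set.Ioc (0:ℝ) 1,
      (M : ℝ) ≤ ((∑ i ∈ Finset.range p, z ^ i) / z ^ (((p - 1 : ℕ) * m : ℝ) / k)) ^ n := by
    intro z hz
    obtain ⟨hz0, hz1⟩ := hz
    set al : ℝ := ((p - 1 : ℕ) * m : ℝ) / k with hal
    have hexp : ∀ e : Fin n → Fin p, (∑ l, (e l : ℕ)) ≤ (m*n)*(p-1)/k →
        z ^ (al * n) ≤ ∏ l, z ^ (e l : ℕ) := by
      intro e he
      rw [Finset.prod_pow_eq_pow_sum]
      rw [← Real.rpow_natCast z (∑ l, (e l : ℕ))]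
      apply Real.rpow_le_rpow_of_exponent_ge hz0 hz1
      have h1 : ((∑ l, (e l : ℕ) : ℕ) : ℝ) ≤ (((m*n)*(p-1)/k : ℕ) : ℝ) := Nat.cast_le.2 he
      have h2 : (((m*n)*(p-1)/k : ℕ) : ℝ) ≤ ((m*n)*(p-1) : ℕ) / (k:ℝ) := Nat.cast_div_le
      have h3 : (((m*n)*(p-1) : ℕ) : ℝ) / (k:ℝ) = al * n := by
        rw [hal]
        push_cast
        ring
      linarith
    have sum_all : ∑ e : Fin n → Fin p, ∏ l, z ^ (e l : ℕ)
        = (∑ i ∈ Finset.range p, z ^ i) ^ n := by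
      calc ∑ e : Fin n → Fin p, ∏ l, z ^ (e l : ℕ)
          = ∑ e ∈ Fintype.piFinset (fun _ : Fin n => (univ : Finset (Fin p))),
              ∏ l, z ^ (e l : ℕ) := by rw [Fintype.piFinset_univ]
        _ = ∏ _l : Fin n, ∑ j : Fin p, z ^ (j : ℕ) :=
            (Finset.prod_univ_sum (fun _ : Fin n => (univ : Finset (Fin p)))
              (fun _ j => z ^ (j:ℕ))).symm
        _ = ∏ _l : Fin n, ∑ i ∈ Finset.range p, z ^ i :=
            Finset.prod_congr rfl (fun l _ => Fin.sum_univ_eq_sum_range _ p)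
        _ = (∑ i ∈ Finset.range p, z ^ i) ^ n := by
            rw [Finset.prod_const, card_univ, Fintype.card_fin]
    have hMfilter : M = (univ.filter
        (fun e : Fin n → Fin p => ∑ l, (e l : ℕ) ≤ (m*n)*(p-1)/k)).card := by
      rw [hM, Fintype.card_subtype]
    have hchain : (M : ℝ) * z ^ (al * n) ≤ (∑ i ∈ Finset.range p, z ^ i) ^ n := by
      calc (M : ℝ) * z ^ (al * n)
          = ∑ _e ∈ univ.filter (fun e : Fin n → Fin p => ∑ l, (e l : ℕ) ≤ (m*n)*(p-1)/k),
              z ^ (al * n) := by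
            rw [Finset.sum_const, hMfilter, nsmul_eq_mul]
        _ ≤ ∑ e ∈ univ.filter (fun e : Fin n → Fin p => ∑ l, (e l : ℕ) ≤ (m*n)*(p-1)/k),
              ∏ l, z ^ (e l : ℕ) :=
            Finset.sum_le_sum (fun e he => hexp e (Finset.mem_filter.1 he).2)
        _ ≤ ∑ e : Fin n → Fin p, ∏ l, z ^ (e l : ℕ) :=
            Finset.sum_le_sum_of_subset_of_nonneg (Finset.filter_subset _ _)
              (fun e _ _ => Finset.prod_nonneg (fun l _ => by positivity))
        _ = (∑ i ∈ Finset.range p, z ^ i) ^ n := sum_all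
    have hzn : (z ^ al) ^ n = z ^ (al * n) := by
      rw [← Real.rpow_natCast (z ^ al) n, ← Real.rpow_mul (le_of_lt hz0)]
    rw [div_pow, hzn, le_div_iff₀ (by positivity)]
    exact hchain
  -- step 2 : conclude
  by_cases hn : n = 0
  · have h1 := step1 1 ⟨zero_lt_one, le_refl 1⟩
    rw [hn, pow_zero] at h1
    rw [hn, pow_zero]
    exact h1
  have hn0 : (n : ℝ) ≠ 0 := Nat.cast_ne_zero.2 hn
  set cM : ℝ := (M : ℝ) ^ ((n : ℝ)⁻¹) with hcM
  have hcle : ∀ y ∈ ((fun z : ℝ => (∑ i ∈ Finset.range p, z ^ i)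
      / z ^ (((p - 1 : ℕ) * m : ℝ) / k)) '' Set.Ioc (0 : ℝ) 1), cM ≤ y := by
    rintro y ⟨z, hz, rfl⟩
    have h1 := step1 z hz
    have h2 : cM ≤ (((∑ i ∈ Finset.range p, z ^ i)
        / z ^ (((p - 1 : ℕ) * m : ℝ) / k)) ^ n) ^ ((n:ℝ)⁻¹) :=
      Real.rpow_le_rpow (Nat.cast_nonneg M) h1 (by positivity)
    have h3 : (((∑ i ∈ Finset.range p, z ^ i)
        / z ^ (((p - 1 : ℕ) * m : ℝ) / k)) ^ n) ^ ((n:ℝ)⁻¹)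
        = (∑ i ∈ Finset.range p, z ^ i) / z ^ (((p - 1 : ℕ) * m : ℝ) / k) := by
      rw [← Real.rpow_natCast ((∑ i ∈ Finset.range p, z ^ i)
        / z ^ (((p - 1 : ℕ) * m : ℝ) / k)) n, ← Real.rpow_mul (le_of_lt (fz_pos p m k hz)),
        mul_inv_cancel₀ hn0, Real.rpow_one]
    rw [h3] at h2
    exact h2
  have hcΓ : cM ≤ Gamma p m k := le_csInf (Gamma_im_nonempty p m k) hcle
  have hc0 : 0 ≤ cM := Real.rpow_nonneg (Nat.cast_nonneg M) _
  calc (M : ℝ) = cM ^ n := by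
        rw [← Real.rpow_natCast cM n, hcM, ← Real.rpow_mul (Nat.cast_nonneg M),
          inv_mul_cancel₀ hn0, Real.rpow_one]
    _ ≤ (Gamma p m k) ^ n := pow_le_pow_left₀ hc0 hcΓ n

end GammaFacts

/-- Tao: for any homogeneous system of `m` equations in `k ≥ 2m+1` variables
over `𝔽_p` whose coefficient rows sum to zero, every `A ⊆ 𝔽_p^n` with `|A| > Γ_{p,m,k}^n`
contains a solution `(x₁,…,x_k) ∈ A^k` with the `x_i` not all equal. -/
theorem stmt_9 (p m k : ℕ) [Fact p.Prime] (hm : 1 ≤ m) (hk : 2 * m + 1 ≤ k)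
    (a : Fin m → Fin k → ZMod p) (ha : ∀ j, ∑ i : Fin k, a j i = 0)
    (n : ℕ) (A : Finset (Fin n → ZMod p)) (hA : ((A.card : ℝ)) > (Gamma p m k) ^ n) :
    ∃ x : Fin k → (Fin n → ZMod p), (∀ i, x i ∈ A) ∧
      (∀ j : Fin m, ∑ i : Fin k, a j i • x i = 0) ∧
      ¬ (∀ i i' : Fin k, x i = x i') := by
  classical
  by_contra hnosol
  have hk3 : 3 ≤ k := by omega
  have hΓ1 : 1 ≤ Gamma p m k := one_le_Gamma p m k
  have hk0 : 0 < k := by omega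
  have hΓn : (1:ℝ) ≤ Gamma p m k ^ n := one_le_pow₀ hΓ1
  have main : ∀ t : ℕ, (A.card : ℝ) ^ t ≤ k * (Gamma p m k ^ n) ^ t := by
    intro t
    set Φ : (Fin t → (Fin n → ZMod p)) ≃ (Fin (t*n) → ZMod p) :=
      (Equiv.curry (Fin t) (Fin n) (ZMod p)).symm.trans
        (Equiv.arrowCongr finProdFinEquiv (Equiv.refl (ZMod p))) with hΦ
    have hΦeval : ∀ (y : Fin t → Fin n → ZMod p) (s : Fin t) (l : Fin n),
        Φ y (finProdFinEquiv (s, l)) = y s l := by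
      intro y s l
      rw [hΦ]
      simp [Equiv.curry, Equiv.arrowCongr, Function.uncurry]
    set A' : Finset (Fin (t*n) → ZMod p) := (Fintype.piFinset (fun _ : Fin t => A)).image Φ
      with hA'
    have hcardA' : A'.card = A.card ^ t := by
      rw [hA', Finset.card_image_of_injective _ Φ.injective, Fintype.card_piFinset]
      simp
    have hnosol' : ¬ ∃ x : Fin k → (Fin (t*n) → ZMod p), (∀ i, x i ∈ A') ∧
        (∀ j : Fin m, ∑ i : Fin k, a j i • x i = 0) ∧ ¬ (∀ i i' : Fin k, x i = x i') := by
      rintro ⟨x, hxA, hxsol, hxne⟩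
      set y : Fin k → Fin t → Fin n → ZMod p := fun i => Φ.symm (x i) with hy
      have hxΦ : ∀ i, x i = Φ (y i) := by
        intro i; rw [hy, Equiv.apply_symm_apply]
      have hyA : ∀ i s, y i s ∈ A := by
        intro i s
        obtain ⟨w, hw, hwx⟩ := Finset.mem_image.1 (hxA i)
        have hyw : y i = w := by
          show Φ.symm (x i) = w
          rw [← hwx, Equiv.symm_apply_apply]
        rw [hyw]
        exact Fintype.mem_piFinset.1 hw s
      push_neg at hxne
      obtain ⟨i₀, i₁, hne⟩ := hxne
      have hyne : y i₀ ≠ y i₁ := by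
        intro h
        apply hne
        rw [hxΦ i₀, hxΦ i₁, h]
      have hexs : ∃ s, y i₀ s ≠ y i₁ s := by
        by_contra hs
        push_neg at hs
        exact hyne (funext hs)
      obtain ⟨s, hs⟩ := hexs
      apply hnosol
      refine ⟨fun i => y i s, fun i => hyA i s, ?_, ?_⟩
      · intro j
        funext l
        have hev := congrFun (hxsol j) (finProdFinEquiv (s, l))
        simp only [Finset.sum_apply, Pi.smul_apply, smul_eq_mul, Pi.zero_apply] at hev ⊢
        rw [← hev]
        apply Finset.sum_congr rfl
        intro i _
        rw [hxΦ i, hΦeval (y i) s l]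
      · intro hall
        exact hs (hall i₀ i₁)
    have hkey := key_bound p m k (t*n) hk3 a ha A' hnosol'
    have hcount := count_le_Gamma_pow p m k (t*n) hk0
    have hstep : (A'.card : ℝ) ≤ (k : ℝ) * (Gamma p m k)^(t*n) := by
      calc (A'.card : ℝ)
          ≤ ((k * Fintype.card {e : Fin (t*n) → Fin p //
              ∑ l, (e l : ℕ) ≤ (m*(t*n))*(p-1)/k} : ℕ) : ℝ) := Nat.cast_le.2 hkey
        _ = (k : ℝ) * (Fintype.card {e : Fin (t*n) → Fin p //
              ∑ l, (e l : ℕ) ≤ (m*(t*n))*(p-1)/k} : ℝ) := by push_cast; ring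
        _ ≤ (k : ℝ) * (Gamma p m k)^(t*n) :=
            mul_le_mul_of_nonneg_left hcount (Nat.cast_nonneg k)
    rw [hcardA'] at hstep
    push_cast at hstep
    calc (A.card : ℝ) ^ t ≤ (k : ℝ) * (Gamma p m k)^(t*n) := hstep
      _ = (k : ℝ) * (Gamma p m k ^ n) ^ t := by rw [← pow_mul, mul_comm n t]
  set Q := (A.card : ℝ) with hQ
  set u := Gamma p m k ^ n with hu
  have hu0 : (0:ℝ) < u := lt_of_lt_of_le zero_lt_one hΓn
  have hQu1 : 1 < Q / u := (one_lt_div hu0).2 hA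
  obtain ⟨t, ht⟩ := pow_unbounded_of_one_lt (k:ℝ) hQu1
  have hmt := main t
  have h2 : (Q/u)^t ≤ (k:ℝ) := by
    rw [div_pow, div_le_iff₀ (by positivity)]
    exact hmt
  linarith
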